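/- Equivalence of the two partial-observability constructions: for a DFA D over Σ1 × Σ2, the DFA obtained by the belief-state construction applied to D accepts exactly the same language as the DFA obtained by the projection-based construction applied to the complement of D (i.e., complement D, view as NFA, project onto Σ1, determinize, complement). Both accept { a1…an | ∀ b1,…,bn, D accepts (a1,b1)…(an,bn) }. -/
import Mathlib

/-- The belief-state DFA of a DFA `D` over `Σ₁ × Σ₂`: complement the accepting
set, project onto `Σ₁`, determinize by subset construction, complement again. -/
def DFA.beliefDFA {α β : Type*} {σ : Type*} (D : DFA (α × β) σ) : DFA α (Set σ) :=
  { step := fun T a => { t | ∃ s ∈ T, ∃ b : β, D.step s (a, b) = t }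
    start := {D.start}
    accept := { T : Set σ | ¬ (T ∩ D.acceptᶜ).Nonempty } }

/-- The projection-based construction applied to an NFA `N` over `Σ₁ × Σ₂`:
project onto `Σ₁`, determinize via subset construction, complement. -/
def NFA.projDetComp {α β : Type*} {τ : Type*} (N : NFA (α × β) τ) : DFA α (Set τ) :=
  { step := fun T a => ⋃ s ∈ T, ⋃ b : β, N.step s (a, b)
    start := N.start
    accept := { T : Set τ | ¬ (T ∩ N.accept).Nonempty } }

lemma belief_eval {α β : Type*} {σ : Type*} (D : DFA (α × β) σ) (w : List α) (T : Set σ) :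
    D.beliefDFA.evalFrom T w =
      { t | ∃ s ∈ T, ∃ bs : List β, bs.length = w.length ∧ D.evalFrom s (w.zip bs) = t } := by
  induction w generalizing T with
  | nil =>
    ext t
    simp [List.length_eq_zero_iff]
  | cons a w ih =>
    show D.beliefDFA.evalFrom (D.beliefDFA.step T a) w = _
    rw [ih]
    ext t
    constructor
    · rintro ⟨s, hs, bs, hlen, rfl⟩
      obtain ⟨s₀, hs₀, b, rfl⟩ := hs
      exact ⟨s₀, hs₀, b :: bs, by simp [hlen], rfl⟩
    · rintro ⟨s₀, hs₀, bs, hlen, rfl⟩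
      cases bs with
      | nil => simp at hlen
      | cons b bs =>
        exact ⟨D.step s₀ (a, b), ⟨s₀, hs₀, b, rfl⟩, bs, by simpa using hlen, rfl⟩

lemma nfa_eval_iUnion {α : Type*} {τ ι : Type*} (N : NFA α τ) (S : ι → Set τ) (w : List α) :
    N.evalFrom (⋃ i, S i) w = ⋃ i, N.evalFrom (S i) w := by
  induction w generalizing S with
  | nil => simp
  | cons a w ih =>
    show N.evalFrom (N.stepSet _ a) w = _
    have : N.stepSet (⋃ i, S i) a = ⋃ i, N.stepSet (S i) a := by
      ext t; simp [NFA.stepSet]; tauto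
    rw [this, ih]
    rfl

lemma proj_eval {α β : Type*} {τ : Type*} (N : NFA (α × β) τ) (w : List α) (T : Set τ) :
    N.projDetComp.evalFrom T w =
      { t | ∃ bs : List β, bs.length = w.length ∧ t ∈ N.evalFrom T (w.zip bs) } := by
  induction w generalizing T with
  | nil =>
    ext t
    simp [List.length_eq_zero_iff]
  | cons a w ih =>
    show N.projDetComp.evalFrom (N.projDetComp.step T a) w = _
    rw [ih]
    have hstep : N.projDetComp.step T a = ⋃ b : β, N.stepSet T (a, b) := by
      ext t; simp [NFA.projDetComp, NFA.stepSet]; tauto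
    ext t
    constructor
    · rintro ⟨bs, hlen, ht⟩
      rw [hstep, nfa_eval_iUnion] at ht
      obtain ⟨b, hb⟩ := Set.mem_iUnion.mp ht
      exact ⟨b :: bs, by simp [hlen], hb⟩
    · rintro ⟨bs, hlen, ht⟩
      cases bs with
      | nil => simp at hlen
      | cons b bs =>
        refine ⟨bs, by simpa using hlen, ?_⟩
        rw [hstep, nfa_eval_iUnion]
        exact Set.mem_iUnion.mpr ⟨b, ht⟩

/-- Equivalence of the two partial-observability constructions: for a DFA `D`
over `Σ₁ × Σ₂` and any NFA `N` accepting the complement of the language of `D`,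
the belief-state construction applied to `D` and the projection-based
construction applied to `N` accept the same language, namely the universal
projection `{ a₁…aₙ | ∀ b₁,…,bₙ, D accepts (a₁,b₁)…(aₙ,bₙ) }`. -/
theorem belief_eq_projection {α β : Type*} {σ τ : Type*} (D : DFA (α × β) σ)
    (N : NFA (α × β) τ) (hN : N.accepts = D.acceptsᶜ) :
    D.beliefDFA.accepts = N.projDetComp.accepts ∧
      D.beliefDFA.accepts =
        { w : List α | ∀ bs : List β, bs.length = w.length → w.zip bs ∈ D.accepts } := by
  have hbelief : D.beliefDFA.accepts =
      { w : List α | ∀ bs : List β, bs.length = w.length → w.zip bs ∈ D.accepts } := by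
    ext w
    rw [DFA.mem_accepts]
    show D.beliefDFA.evalFrom D.beliefDFA.start w ∈ _ ↔ _
    rw [show D.beliefDFA.start = ({D.start} : Set σ) from rfl, belief_eval]
    constructor
    · intro h bs hlen
      by_contra hacc
      exact h ⟨_, ⟨D.start, rfl, bs, hlen, rfl⟩, hacc⟩
    · rintro h ⟨t, ⟨s, hs, bs, hlen, rfl⟩, hacc⟩
      rw [Set.mem_singleton_iff] at hs
      subst hs
      exact hacc (h bs hlen)
  refine ⟨?_, hbelief⟩
  rw [hbelief]
  ext w
  rw [DFA.mem_accepts]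
  show _ ↔ N.projDetComp.evalFrom N.projDetComp.start w ∈ _
  rw [show N.projDetComp.start = N.start from rfl, proj_eval]
  have hmem : ∀ x : List (α × β), x ∈ N.accepts ↔ (N.evalFrom N.start x ∩ N.accept).Nonempty := by
    intro x
    rw [NFA.mem_accepts]
    constructor
    · rintro ⟨S, hS, hSx⟩; exact ⟨S, hSx, hS⟩
    · rintro ⟨S, hSx, hS⟩; exact ⟨S, hS, hSx⟩
  constructor
  · rintro h ⟨t, ⟨bs, hlen, ht⟩, hacc⟩
    have : w.zip bs ∈ N.accepts := (hmem _).mpr ⟨t, ht, hacc⟩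
    rw [hN] at this
    exact this (h bs hlen)
  · intro h bs hlen
    by_contra hacc
    have : w.zip bs ∈ N.accepts := by rw [hN]; exact hacc
    obtain ⟨t, ht, htacc⟩ := (hmem _).mp this
    exact h ⟨t, ⟨bs, hlen, ht⟩, htacc⟩
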